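/- arXiv:1312.7738 — 3 statements merged into one kernel-verified Lean document; each statement's English description precedes it below -/
import Mathlib

section
/- Let 𝓚 be a complex Hilbert space, J a fundamental symmetry on 𝓚, and B the associated Krein inner product. Let H : 𝓚 → 𝓚 be a continuous linear operator and for t ∈ ℝ let U(t) := exp(−(i t) • H) be the operator exponential. Then time evolution is Krein-unitary, i.e. B(U(t) φ, U(t) ψ) = B(φ, ψ) for all t ∈ ℝ and all φ, ψ ∈ 𝓚, if and only if H is J-Hermitian, i.e. H^♯ = H. -/
open InnerProductSpace ContinuousLinearMap

local notation "⟪" x ", " y "⟫" => @inner ℂ _ _ x y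

private lemma hasDerivAt_comp_ofReal' {E : Type*} [NormedAddCommGroup E] [NormedSpace ℂ E]
    {f : ℂ → E} {f' : E} {z : ℝ} (hf : HasDerivAt f f' (z : ℂ)) :
    HasDerivAt (fun t : ℝ => f t) f' z := by
  have h1 := (hf.hasFDerivAt.restrictScalars ℝ).comp z Complex.ofRealCLM.hasFDerivAt
  have h2 : ((ContinuousLinearMap.toSpanSingleton ℂ f').restrictScalars ℝ).comp Complex.ofRealCLM
      = ContinuousLinearMap.toSpanSingleton ℝ f' := by
    ext
    simp
  rw [hasDerivAt_iff_hasFDerivAt]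
  rw [h2] at h1
  exact h1

set_option maxHeartbeats 1600000 in
/-- time evolution `U(t) = exp(-(i t) • H)` preserves the Krein inner product
`B(φ, ψ) = ⟪φ, J ψ⟫` for all times `t` iff the Hamiltonian `H` is `J`-Hermitian, i.e.
`H^♯ = J ∘ H† ∘ J = H`. -/
theorem stmt9 {𝓚 : Type*} [NormedAddCommGroup 𝓚] [InnerProductSpace ℂ 𝓚] [CompleteSpace 𝓚]
    (J : 𝓚 →L[ℂ] 𝓚) (hJ2 : ∀ x, J (J x) = x)
    (hJsym : ∀ φ ψ : 𝓚, ⟪J φ, ψ⟫ = ⟪φ, J ψ⟫)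
    (H : 𝓚 →L[ℂ] 𝓚) :
    (∀ t : ℝ, ∀ φ ψ : 𝓚,
        ⟪NormedSpace.exp (-(Complex.I * t) • H) φ,
          J (NormedSpace.exp (-(Complex.I * t) • H) ψ)⟫ = ⟪φ, J ψ⟫) ↔
    J ∘L adjoint H ∘L J = H := by
  have hJJ : J * J = 1 := by ext x; exact hJ2 x
  -- adjoint of the exponential
  have hadj : ∀ t : ℝ, adjoint (NormedSpace.exp (-(Complex.I * t) • H))
      = NormedSpace.exp ((Complex.I * t) • adjoint H) := by
    intro t
    rw [← star_eq_adjoint, NormedSpace.star_exp]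
    congr 1
    rw [star_smul, star_eq_adjoint]
    congr 1
    simp [Complex.conj_ofReal]
  -- the inner product condition is equivalent to an operator identity
  have key : ∀ t : ℝ, (∀ φ ψ : 𝓚,
      ⟪NormedSpace.exp (-(Complex.I * t) • H) φ,
        J (NormedSpace.exp (-(Complex.I * t) • H) ψ)⟫ = ⟪φ, J ψ⟫) ↔
      NormedSpace.exp ((Complex.I * t) • adjoint H) * J
        * NormedSpace.exp (-(Complex.I * t) • H) = J := by
    intro t
    constructor
    · intro h
      ext ψ
      apply ext_inner_left ℂ
      intro φ
      have := h φ ψ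
      rwa [← adjoint_inner_right, hadj] at this
    · intro h φ ψ
      rw [← adjoint_inner_right, hadj]
      have : (NormedSpace.exp ((Complex.I * t) • adjoint H) * J
          * NormedSpace.exp (-(Complex.I * t) • H)) ψ = J ψ := by rw [h]
      simp only [ContinuousLinearMap.mul_def, ContinuousLinearMap.comp_apply] at this
      rw [this]
  constructor
  · -- forward: differentiate at t = 0
    intro h
    have hop : ∀ t : ℝ, NormedSpace.exp ((Complex.I * t) • adjoint H) * J
        * NormedSpace.exp (-(Complex.I * t) • H) = J := fun t => (key t).1 (h t)
    -- derivative of each exponential factor at 0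
    have d1 : HasDerivAt (fun t : ℝ => NormedSpace.exp ((Complex.I * t) • adjoint H))
        (Complex.I • adjoint H) 0 := by
      have : ∀ t : ℝ, (Complex.I * t) • adjoint H = (t : ℂ) • (Complex.I • adjoint H) := by
        intro t; rw [smul_smul, mul_comm]
      simp only [this]
      have := hasDerivAt_comp_ofReal' ((hasDerivAt_exp_smul_const (𝔸 := 𝓚 →L[ℂ] 𝓚)
        (Complex.I • adjoint H) (((0 : ℝ) : ℂ))))
      simpa using this
    have d2 : HasDerivAt (fun t : ℝ => NormedSpace.exp (-(Complex.I * t) • H))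
        (-(Complex.I • H)) 0 := by
      have : ∀ t : ℝ, -(Complex.I * t) • H = (t : ℂ) • (-(Complex.I • H)) := by
        intro t; rw [smul_neg, smul_smul, mul_comm, neg_smul]
      simp only [this]
      have := hasDerivAt_comp_ofReal' ((hasDerivAt_exp_smul_const (𝔸 := 𝓚 →L[ℂ] 𝓚)
        (-(Complex.I • H)) (((0 : ℝ) : ℂ))))
      simpa using this
    have dg : HasDerivAt (fun t : ℝ => NormedSpace.exp ((Complex.I * t) • adjoint H) * J
        * NormedSpace.exp (-(Complex.I * t) • H))
        ((Complex.I • adjoint H) * J * 1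
          + (1 * J) * (-(Complex.I • H))) 0 := by
      have := ((d1.mul (hasDerivAt_const (0 : ℝ) J)).mul d2)
      simpa [Pi.mul_def] using this
    have dconst : HasDerivAt (fun _ : ℝ => J) (0 : 𝓚 →L[ℂ] 𝓚) 0 := hasDerivAt_const _ _
    have heq : (fun t : ℝ => NormedSpace.exp ((Complex.I * t) • adjoint H) * J
        * NormedSpace.exp (-(Complex.I * t) • H)) = fun _ : ℝ => J := funext hop
    rw [heq] at dg
    have hzero : (Complex.I • adjoint H) * J * 1 + (1 * J) * (-(Complex.I • H)) = 0 :=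
      dg.unique dconst
    have h2 : (Complex.I • adjoint H) * J = J * (Complex.I • H) := by
      rw [mul_one, one_mul] at hzero
      have := eq_neg_of_add_eq_zero_left hzero
      rw [this]; simp [mul_neg]
    have h3 : adjoint H * J = J * H := by
      have : Complex.I • (adjoint H * J) = Complex.I • (J * H) := by
        rw [← smul_mul_assoc, h2, mul_smul_comm]
      exact smul_right_injective _ Complex.I_ne_zero this
    calc J ∘L adjoint H ∘L J = J * (adjoint H * J) := rfl
      _ = J * (J * H) := by rw [h3]
      _ = (J * J) * H := by rw [← mul_assoc]
      _ = H := by rw [hJJ, one_mul]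
  · -- backward
    intro h t
    apply (key t).2
    have hx2 : ∀ x, adjoint H (J x) = J (H x) := by
      intro x
      have hx : J (adjoint H (J x)) = H x := by
        have := DFunLike.congr_fun h x
        simpa using this
      rw [← hJ2 (adjoint H (J x)), hx]
    have hHpt : ∀ x, adjoint H x = J (H (J x)) := by
      intro x
      calc adjoint H x = adjoint H (J (J x)) := by rw [hJ2]
        _ = J (H (J x)) := hx2 (J x)
    have hH : adjoint H = J * H * J := by
      ext x
      simp only [ContinuousLinearMap.mul_def, ContinuousLinearMap.comp_apply]
      exact hHpt x
    -- units for conjugation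
    let Ju : (𝓚 →L[ℂ] 𝓚)ˣ := ⟨J, J, hJJ, hJJ⟩
    have hconj : NormedSpace.exp ((Complex.I * t) • adjoint H)
        = J * NormedSpace.exp ((Complex.I * t) • H) * J := by
      have : (Complex.I * t) • adjoint H = J * ((Complex.I * t) • H) * J := by
        rw [hH, mul_smul_comm, smul_mul_assoc]
      rw [this]
      let +nondep : NormedAlgebra ℚ (𝓚 →L[ℂ] 𝓚) := .restrictScalars ℚ ℂ _
      exact NormedSpace.exp_units_conj Ju _
    rw [hconj]
    have hcom : Commute ((Complex.I * t) • H) (-(Complex.I * t) • H) := by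
      rw [neg_smul]; exact (Commute.refl _).neg_right
    have hmul : NormedSpace.exp ((Complex.I * t) • H)
        * NormedSpace.exp (-(Complex.I * t) • H) = 1 := by
      let +nondep : NormedAlgebra ℚ (𝓚 →L[ℂ] 𝓚) := .restrictScalars ℚ ℂ _
      rw [← NormedSpace.exp_add_of_commute hcom, neg_smul, add_neg_cancel,
        NormedSpace.exp_zero]
    rw [mul_assoc (J * NormedSpace.exp ((Complex.I * t) • H)) J J, hJJ, mul_one,
      mul_assoc, hmul, mul_one]
end

section
/- Let 𝓚 be a complex Hilbert space and H : 𝓚 → 𝓚 a continuous linear operator, and for t ∈ ℝ let U(t) := exp(−(i t) • H) be the operator exponential. Then ⟪U(t) φ, U(t) ψ⟫ = ⟪φ, ψ⟫ for all t ∈ ℝ and all φ, ψ ∈ 𝓚 if and only if H is self-adjoint, i.e. H† = H. -/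
open InnerProductSpace ContinuousLinearMap

local notation "⟪" x ", " y "⟫" => @inner ℂ _ _ x y

/-- time evolution `U(t) = exp(-(i t) • H)` preserves the Hilbert-space inner
product for all times `t` iff the Hamiltonian `H` is self-adjoint, `H† = H`. -/
theorem stmt10 {𝓚 : Type*} [NormedAddCommGroup 𝓚] [InnerProductSpace ℂ 𝓚] [CompleteSpace 𝓚]
    (H : 𝓚 →L[ℂ] 𝓚) :
    (∀ t : ℝ, ∀ φ ψ : 𝓚,
        ⟪NormedSpace.exp (-(Complex.I * t) • H) φ,
          NormedSpace.exp (-(Complex.I * t) • H) ψ⟫ = ⟪φ, ψ⟫) ↔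
    adjoint H = H := by
  set A : 𝓚 →L[ℂ] 𝓚 := (-Complex.I) • H with hA
  have hsm : ∀ t : ℝ, -(Complex.I * t) • H = t • A := by
    intro t
    rw [hA, ← smul_assoc]
    congr 1
    show -(Complex.I * t) = t • (-Complex.I)
    rw [Complex.real_smul]
    ring
  have hUA : ∀ t : ℝ, NormedSpace.exp (-(Complex.I * t) • H) = NormedSpace.exp (t • A) := by
    intro t
    rw [hsm]
  constructor
  · intro h
    have key : ∀ φ ψ : 𝓚, ⟪H φ, ψ⟫ = ⟪φ, H ψ⟫ := by
      intro φ ψ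
      have hd : ∀ χ : 𝓚, HasDerivAt (fun t : ℝ => NormedSpace.exp (t • A) χ) (A χ) 0 := by
        intro χ
        have h1 : HasDerivAt (fun u : ℝ => NormedSpace.exp (u • A))
            (NormedSpace.exp ((0:ℝ) • A) * A) 0 :=
          hasDerivAt_exp_smul_const A (0:ℝ)
        have e : (𝓚 →L[ℂ] 𝓚) →L[ℝ] 𝓚 :=
          (ContinuousLinearMap.apply ℂ 𝓚 χ).restrictScalars ℝ
        have h2 := (((ContinuousLinearMap.apply ℂ 𝓚 χ).restrictScalars
            ℝ).hasFDerivAt).comp_hasDerivAt (0:ℝ) h1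
        simpa [NormedSpace.exp_zero, Function.comp_def] using h2
      have hder : HasDerivAt (fun t : ℝ => ⟪NormedSpace.exp (t • A) φ,
          NormedSpace.exp (t • A) ψ⟫)
          (⟪NormedSpace.exp ((0:ℝ) • A) φ, A ψ⟫ + ⟪A φ, NormedSpace.exp ((0:ℝ) • A) ψ⟫) 0 :=
        (hd φ).inner ℂ (hd ψ)
      have hconst : (fun t : ℝ => ⟪NormedSpace.exp (t • A) φ,
          NormedSpace.exp (t • A) ψ⟫) = fun _ : ℝ => ⟪φ, ψ⟫ := by
        funext t
        rw [← hUA t]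
        exact h t φ ψ
      have hzero : HasDerivAt (fun t : ℝ => ⟪NormedSpace.exp (t • A) φ,
          NormedSpace.exp (t • A) ψ⟫) 0 0 := by
        rw [hconst]; exact hasDerivAt_const 0 _
      have heq := hder.unique hzero
      simp only [zero_smul, NormedSpace.exp_zero, ContinuousLinearMap.one_apply, hA,
        ContinuousLinearMap.smul_apply, inner_smul_left, inner_smul_right, map_neg,
        Complex.conj_I] at heq
      have : Complex.I * ⟪H φ, ψ⟫ = Complex.I * ⟪φ, H ψ⟫ := by linear_combination heq
      exact mul_left_cancel₀ Complex.I_ne_zero this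
    have : H = adjoint H := (ContinuousLinearMap.eq_adjoint_iff H H).mpr key
    exact this.symm
  · intro hH t φ ψ
    have hstar : adjoint (NormedSpace.exp (-(Complex.I * t) • H))
        = NormedSpace.exp ((Complex.I * t) • H) := by
      rw [← ContinuousLinearMap.star_eq_adjoint, NormedSpace.star_exp, star_smul,
        ContinuousLinearMap.star_eq_adjoint, hH]
      congr 1
      simp [Complex.conj_ofReal]
    have hcomm : Commute ((Complex.I * t) • H) (-(Complex.I * t) • H) := by
      rw [neg_smul]
      exact (Commute.refl _).neg_right
    have hmul : NormedSpace.exp ((Complex.I * t) • H) *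
        NormedSpace.exp (-(Complex.I * t) • H) = 1 := by
      let +nondep : NormedAlgebra ℚ (𝓚 →L[ℂ] 𝓚) := .restrictScalars ℚ ℂ (𝓚 →L[ℂ] 𝓚)
      rw [← NormedSpace.exp_add_of_commute hcomm, neg_smul, add_neg_cancel,
        NormedSpace.exp_zero]
    have h2 : adjoint (NormedSpace.exp (-(Complex.I * t) • H))
        (NormedSpace.exp (-(Complex.I * t) • H) ψ) = ψ := by
      rw [hstar, ← ContinuousLinearMap.mul_apply, hmul, ContinuousLinearMap.one_apply]
    rw [← ContinuousLinearMap.adjoint_inner_right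
      (NormedSpace.exp (-(Complex.I * t) • H)) φ
      (NormedSpace.exp (-(Complex.I * t) • H) ψ), h2]
end

section
/- Let ℏ, m > 0 be real, V : ℝ → ℂ, and let ψ : ℝ × ℝ → ℂ (written ψ(x, t)) be twice continuously differentiable and satisfy the Schrödinger equation i ℏ ∂ψ/∂t(x, t) = −(ℏ²/(2m)) ∂²ψ/∂x²(x, t) + V(x) ψ(x, t) for all x, t. Define the probability density w(x, t) := conj(ψ(x, t)) · ψ(−x, t) and the particle current density j(x, t) := (i ℏ/(2m)) · (∂ₓ(conj ψ)(x, t) · ψ(−x, t) − conj(ψ(x, t)) · dₓ[x ↦ ψ(−x, t)](x)). Then for all x, t: ∂w/∂t(x, t) + ∂j/∂x(x, t) = (i/ℏ) · (conj(V(x)) − V(−x)) · w(x, t). In particular, the continuity equation ∂w/∂t + ∂j/∂x = 0 holds whenever V is PT-symmetric, i.e. conj(V(x)) = V(−x) for all x. -/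
open ComplexConjugate

private lemma hasDerivAt_conj' {g : ℝ → ℂ} {g' : ℂ} {x : ℝ} (hg : HasDerivAt g g' x) :
    HasDerivAt (fun y => conj (g y)) (conj g') x := by
  simpa [Function.comp_def] using (Complex.conjCLE.toContinuousLinearMap.hasFDerivAt.comp_hasDerivAt x hg)

/-- for a twice continuously differentiable solution `ψ(x, t)` of the
Schrödinger equation with potential `V`, the probability density
`w(x,t) = conj (ψ(x,t)) ψ(-x,t)` and the particle current density `j` satisfy
`∂w/∂t + ∂j/∂x = (i/ℏ)(conj (V x) - V (-x)) w`; in particular the continuity equation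
`∂w/∂t + ∂j/∂x = 0` holds whenever `V` is PT-symmetric. -/
theorem stmt15 (hbar m : ℝ) (hhbar : 0 < hbar) (hm : 0 < m)
    (V : ℝ → ℂ) (ψ : ℝ × ℝ → ℂ) (hψ : ContDiff ℝ 2 ψ)
    (hSchr : ∀ x t : ℝ,
      Complex.I * (hbar : ℂ) * deriv (fun s => ψ (x, s)) t =
        -((hbar : ℂ) ^ 2 / (2 * (m : ℂ))) * deriv (deriv fun y => ψ (y, t)) x +
          V x * ψ (x, t))
    (w j : ℝ → ℝ → ℂ)
    (hw : ∀ x t : ℝ, w x t = conj (ψ (x, t)) * ψ (-x, t))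
    (hj : ∀ x t : ℝ, j x t =
      Complex.I * (hbar : ℂ) / (2 * (m : ℂ)) *
        ((deriv fun y => conj (ψ (y, t))) x * ψ (-x, t) -
          conj (ψ (x, t)) * (deriv fun y => ψ (-y, t)) x)) :
    (∀ x t : ℝ,
      deriv (fun s => w x s) t + deriv (fun y => j y t) x =
        Complex.I / (hbar : ℂ) * (conj (V x) - V (-x)) * w x t) ∧
    ((∀ x : ℝ, conj (V x) = V (-x)) →
      ∀ x t : ℝ, deriv (fun s => w x s) t + deriv (fun y => j y t) x = 0) := by
  have hbC : (hbar:ℂ) ≠ 0 := Complex.ofReal_ne_zero.mpr hhbar.ne'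
  have hmC : (m:ℂ) ≠ 0 := Complex.ofReal_ne_zero.mpr hm.ne'
  have key : ∀ x t : ℝ, deriv (fun s => w x s) t + deriv (fun y => j y t) x =
      Complex.I / (hbar : ℂ) * (conj (V x) - V (-x)) * w x t := by
    intro x t
    have hx2 : ContDiff ℝ 2 (fun y : ℝ => ψ (y, t)) :=
      hψ.comp (contDiff_id.prodMk contDiff_const)
    have ht2 : ∀ a : ℝ, ContDiff ℝ 2 (fun s : ℝ => ψ (a, s)) := fun a =>
      hψ.comp (contDiff_const.prodMk contDiff_id)
    have hx1 : Differentiable ℝ (fun y : ℝ => ψ (y, t)) :=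
      hx2.differentiable (by norm_num)
    have hdx1 : ContDiff ℝ 1 (deriv (fun y : ℝ => ψ (y, t))) := by
      have h11 : ((1:WithTop ℕ∞)+1) = 2 := by norm_num
      exact ((contDiff_succ_iff_deriv (n := 1)).mp (h11 ▸ hx2)).2.2
    have hdxd : Differentiable ℝ (deriv (fun y : ℝ => ψ (y, t))) :=
      hdx1.differentiable one_ne_zero
    set ψx : ℝ → ℂ := deriv (fun y : ℝ => ψ (y, t)) with hψxdef
    set ψxx : ℝ → ℂ := deriv ψx with hψxxdef
    set ψt : ℝ → ℂ := fun a => deriv (fun s => ψ (a, s)) t with hψtdef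
    -- time derivative of w
    have hψtD : ∀ a : ℝ, HasDerivAt (fun s => ψ (a, s)) (ψt a) t := fun a =>
      (((ht2 a).differentiable (by norm_num)) t).hasDerivAt
    have hwt : HasDerivAt (fun s => w x s)
        (conj (ψt x) * ψ (-x, t) + conj (ψ (x, t)) * ψt (-x)) t := by
      have h := (hasDerivAt_conj' (hψtD x)).mul (hψtD (-x))
      simpa only [hw, Pi.mul_def] using h
    -- space derivatives
    have hψxD : ∀ a : ℝ, HasDerivAt (fun y : ℝ => ψ (y, t)) (ψx a) a := fun a =>
      (hx1 a).hasDerivAt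
    have hψxxD : ∀ a : ℝ, HasDerivAt ψx (ψxx a) a := fun a => (hdxd a).hasDerivAt
    have hneg : ∀ a : ℝ, HasDerivAt (fun y : ℝ => ψ (-y, t)) (-ψx (-a)) a := fun a => by
      simpa [Function.comp_def] using (hψxD (-a)).scomp a (hasDerivAt_neg a)
    have hnegx : HasDerivAt (fun y : ℝ => ψx (-y)) (-ψxx (-x)) x := by
      simpa [Function.comp_def] using (hψxxD (-x)).scomp x (hasDerivAt_neg x)
    have hconjψ : ∀ a : ℝ, HasDerivAt (fun y : ℝ => conj (ψ (y, t))) (conj (ψx a)) a :=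
      fun a => hasDerivAt_conj' (hψxD a)
    have hconjψx : HasDerivAt (fun y : ℝ => conj (ψx y)) (conj (ψxx x)) x :=
      hasDerivAt_conj' (hψxxD x)
    have hjfun : (fun y => j y t) = fun y : ℝ =>
        Complex.I * (hbar : ℂ) / (2 * (m : ℂ)) *
          (conj (ψx y) * ψ (-y, t) - conj (ψ (y, t)) * (-ψx (-y))) := by
      funext y
      rw [hj, (hconjψ y).deriv, (hneg y).deriv]
    have hjD : HasDerivAt (fun y => j y t)
        (Complex.I * (hbar : ℂ) / (2 * (m : ℂ)) *
          ((conj (ψxx x) * ψ (-x, t) + conj (ψx x) * (-ψx (-x))) -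
           (conj (ψx x) * (-ψx (-x)) + conj (ψ (x, t)) * ψxx (-x)))) x := by
      rw [hjfun]
      have h4 : HasDerivAt (fun y : ℝ => -ψx (-y)) (ψxx (-x)) x := by
        simpa [Pi.neg_def] using hnegx.neg
      exact ((hconjψx.mul (hneg x)).sub ((hconjψ x).mul h4)).const_mul _
    -- Schrödinger equations
    have E2 : Complex.I * (hbar : ℂ) * ψt (-x) =
        -((hbar : ℂ) ^ 2 / (2 * (m : ℂ))) * ψxx (-x) + V (-x) * ψ (-x, t) := hSchr (-x) t
    have E1 := congrArg (starRingEnd ℂ) (hSchr x t)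
    simp only [map_mul, map_add, map_neg, map_div₀, map_pow, Complex.conj_I,
      Complex.conj_ofReal, map_ofNat] at E1
    have E1' : -Complex.I * (hbar:ℂ) * conj (ψt x) =
        -((hbar:ℂ)^2/(2*(m:ℂ))) * conj (ψxx x) + conj (V x) * conj (ψ (x,t)) := E1
    rw [hwt.deriv, hjD.deriv, hw x t]
    field_simp at E1' E2 ⊢
    linear_combination Complex.I * ψ (-x, t) * E1' - Complex.I * conj (ψ (x, t)) * E2 + (2 * (m:ℂ) * (hbar:ℂ) * (conj (ψt x) * ψ (-x, t) + conj (ψ (x, t)) * ψt (-x))) * Complex.I_sq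
  exact ⟨key, fun hPT x t => by rw [key x t, hPT x]; ring⟩
end
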